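/- Let X be a metrizable, locally compact and locally connected topological space and let G be a countable discrete group acting by homeomorphisms on X such that the orbit space X/G is Hausdorff. Then every orbit Gx is a discrete subset of X, and every point x ∈ X has a neighbourhood base consisting of connected, G_x-invariant open sets. -/

import Mathlib

open Pointwise MulAction Set Filter Topology

section Aux

variable {G X : Type*} [Group G] [TopologicalSpace X] [MulAction G X] [ContinuousConstSMul G X]

/-- A preconnected set meeting both a set and its complement meets the frontier. -/
lemma aux_preconnected_frontier {s U : Set X} (hs : IsPreconnected s)
    (h1 : (s ∩ U).Nonempty) (h2 : (s \ U).Nonempty) : (s ∩ frontier U).Nonempty := by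
  by_contra h
  rw [Set.not_nonempty_iff_eq_empty] at h
  have hsub : s ⊆ interior U ∪ (closure U)ᶜ := by
    intro y hy
    have hyf : y ∉ frontier U := fun hf => (Set.eq_empty_iff_forall_notMem.1 h y) ⟨hy, hf⟩
    by_cases hyc : y ∈ closure U
    · left
      by_contra hyi
      exact hyf ⟨hyc, hyi⟩
    · exact Or.inr hyc
  obtain ⟨y1, hy1s, hy1⟩ := h1
  obtain ⟨y2, hy2s, hy2⟩ := h2
  have h1' : (s ∩ interior U).Nonempty := by
    refine ⟨y1, hy1s, ?_⟩
    rcases hsub hy1s with h' | h'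
    · exact h'
    · exact absurd (subset_closure hy1) h'
  have h2' : (s ∩ (closure U)ᶜ).Nonempty := by
    refine ⟨y2, hy2s, ?_⟩
    rcases hsub hy2s with h' | h'
    · exact absurd (interior_subset h') hy2
    · exact h'
  obtain ⟨z, -, hz1, hz2⟩ := hs (interior U) (closure U)ᶜ isOpen_interior
    isClosed_closure.isOpen_compl hsub h1' h2'
  exact hz2 (subset_closure (interior_subset hz1))

/-- The orbit of a point is closed when the orbit space is Hausdorff. -/
lemma aux_orbit_isClosed [T2Space (Quotient (MulAction.orbitRel G X))] (x : X) :
    IsClosed (MulAction.orbit G x) := by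
  have : MulAction.orbit G x = Quotient.mk (orbitRel G X) ⁻¹' {Quotient.mk (orbitRel G X) x} := by
    ext y
    simp only [Set.mem_preimage, Set.mem_singleton_iff, Quotient.eq]
    exact (MulAction.orbitRel_apply).symm
  rw [this]
  exact isClosed_singleton.preimage continuous_quotient_mk'

/-- The point `x` is isolated in its orbit. -/
lemma aux_exists_isolated [Countable G] [T2Space X] [LocallyCompactSpace X]
    [T2Space (Quotient (MulAction.orbitRel G X))] (x : X) :
    ∃ O : Set X, IsOpen O ∧ O ∩ MulAction.orbit G x = {x} := by
  set S : Set X := MulAction.orbit G x with hS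
  have hclosed : IsClosed S := aux_orbit_isClosed x
  haveI : LocallyCompactSpace S := hclosed.locallyCompactSpace
  have hcount : S.Countable := by
    have : S = Set.range (fun g : G => g • x) := rfl
    rw [this]; exact Set.countable_range _
  haveI := hcount.to_subtype
  haveI : Nonempty S := ⟨⟨x, MulAction.mem_orbit_self x⟩⟩
  -- Baire: some point of the orbit is isolated
  have hdense : Dense (⋃ i : S, interior ({i} : Set S)) :=
    dense_iUnion_interior_of_closed (fun i => isClosed_singleton) (Set.iUnion_of_singleton S)
  obtain ⟨i, hi⟩ := hdense.nonempty
  obtain ⟨j, hj⟩ := Set.mem_iUnion.1 hi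
  have hij : i = j := Set.mem_singleton_iff.1 (interior_subset hj)
  subst hij
  have hopen : IsOpen ({i} : Set S) := by
    have : interior ({i} : Set S) = {i} :=
      Set.Subset.antisymm interior_subset (Set.singleton_subset_iff.2 hj)
    rw [← this]; exact isOpen_interior
  obtain ⟨O, hO, hOi⟩ := isOpen_induced_iff.1 hopen
  -- convert: O ∩ S = {↑i}
  have hOS : O ∩ S = {(i : X)} := by
    ext a
    constructor
    · rintro ⟨haO, haS⟩
      have : (⟨a, haS⟩ : S) ∈ Subtype.val ⁻¹' O := haO
      rw [hOi] at this
      exact congrArg Subtype.val this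
    · rintro rfl
      refine ⟨?_, i.2⟩
      have : i ∈ Subtype.val ⁻¹' O := by rw [hOi]; rfl
      exact this
  -- translate the isolated point to x
  obtain ⟨g, hg⟩ := i.2
  refine ⟨g⁻¹ • O, hO.smul g⁻¹, ?_⟩
  have hSinv : g⁻¹ • S = S := MulAction.smul_orbit g⁻¹ x
  calc g⁻¹ • O ∩ S = g⁻¹ • O ∩ g⁻¹ • S := by rw [hSinv]
    _ = g⁻¹ • (O ∩ S) := (Set.smul_set_inter).symm
    _ = g⁻¹ • ({(i : X)} : Set X) := by rw [hOS]
    _ = {g⁻¹ • (i : X)} := Set.smul_set_singleton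
    _ = {x} := by rw [← hg, inv_smul_smul]

end Aux

/-- For a countable discrete group acting on a metrizable, locally compact and locally
connected space with Hausdorff orbit space, every orbit is discrete and every point has
a neighbourhood base of connected, stabilizer-invariant open sets. -/
theorem stmt9 {G X : Type*} [Group G] [Countable G] [TopologicalSpace X]
    [TopologicalSpace.MetrizableSpace X] [LocallyCompactSpace X]
    [LocallyConnectedSpace X] [MulAction G X] [ContinuousConstSMul G X]
    [T2Space (Quotient (MulAction.orbitRel G X))] :
    (∀ x : X, DiscreteTopology ↥(MulAction.orbit G x)) ∧
    (∀ (x : X) (U : Set X), x ∈ U → IsOpen U →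
      ∃ V : Set X, IsOpen V ∧ x ∈ V ∧ V ⊆ U ∧ IsConnected V ∧
        ∀ g : G, g • x = x → g • V = V) := by
  letI : MetricSpace X := TopologicalSpace.metrizableSpaceMetric X
  constructor
  · -- discreteness of orbits
    intro x
    rw [discreteTopology_iff_isOpen_singleton]
    rintro ⟨a, ha⟩
    obtain ⟨O, hO, hOS⟩ := aux_exists_isolated (G := G) x
    obtain ⟨h, hh⟩ := ha
    have hh' : h • x = a := hh
    have hxO : x ∈ O := (show x ∈ O ∩ MulAction.orbit G x from hOS.symm ▸ rfl).1
    refine isOpen_induced_iff.2 ⟨h • O, hO.smul h, ?_⟩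
    ext b
    simp only [Set.mem_preimage, Set.mem_singleton_iff]
    constructor
    · intro hb
      have hb' : h⁻¹ • (b : X) ∈ O := by
        rwa [← Set.mem_smul_set_iff_inv_smul_mem]
      have hbS : h⁻¹ • (b : X) ∈ MulAction.orbit G x :=
        MulAction.smul_orbit_subset h⁻¹ x (Set.smul_mem_smul_set b.2)
      have : h⁻¹ • (b : X) ∈ O ∩ MulAction.orbit G x := ⟨hb', hbS⟩
      rw [hOS, Set.mem_singleton_iff] at this
      apply Subtype.ext
      calc (b : X) = h • (h⁻¹ • (b : X)) := (smul_inv_smul h _).symm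
        _ = h • x := by rw [this]
        _ = a := hh'
    · rintro rfl
      show a ∈ h • O
      rw [← hh']
      exact Set.smul_mem_smul_set hxO
  · -- neighbourhood base of connected stabilizer-invariant open sets
    intro x U hxU hU
    obtain ⟨O, hO, hOS⟩ := aux_exists_isolated (G := G) x
    have hxO : x ∈ O := (show x ∈ O ∩ MulAction.orbit G x from hOS.symm ▸ rfl).1
    -- compact neighbourhood inside O ∩ U
    obtain ⟨K, hK, hKsub, hKc⟩ := local_compact_nhds
      (Filter.inter_mem (hO.mem_nhds hxO) (hU.mem_nhds hxU))
    set U₀ : Set X := interior K with hU₀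
    have hU₀open : IsOpen U₀ := isOpen_interior
    have hxU₀ : x ∈ U₀ := mem_interior_iff_mem_nhds.2 hK
    have hclU₀ : closure U₀ ⊆ K := closure_minimal interior_subset hKc.isClosed
    have hfC : IsCompact (frontier U₀) :=
      hKc.of_isClosed_subset isClosed_frontier (frontier_subset_closure.trans hclU₀)
    have hfS : frontier U₀ ∩ MulAction.orbit G x = ∅ := by
      rw [Set.eq_empty_iff_forall_notMem]
      rintro z ⟨hzf, hzS⟩
      have hzO : z ∈ O := (hKsub (hclU₀ (frontier_subset_closure hzf))).1
      have : z = x := by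
        have : z ∈ O ∩ MulAction.orbit G x := ⟨hzO, hzS⟩
        rwa [hOS, Set.mem_singleton_iff] at this
      subst this
      exact (hU₀open.frontier_eq ▸ hzf).2 hxU₀
    -- antitone basis of connected open neighbourhoods
    obtain ⟨B, hB⟩ := Filter.exists_antitone_basis (𝓝 x)
    have hCex : ∀ n : ℕ, ∃ C : Set X, C ⊆ B n ∧ IsOpen C ∧ x ∈ C ∧ IsConnected C := by
      intro n
      exact locallyConnectedSpace_iff_subsets_isOpen_isConnected.1 ‹_› x (B n)
        (hB.toHasBasis.mem_of_mem trivial)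
    choose C hCB hCopen hxC hCconn using hCex
    -- main claim: some C n has all stabilizer translates inside U₀
    have hmain : ∃ n : ℕ, ∀ g : G, g • x = x → g • C n ⊆ U₀ := by
      by_contra hcon
      push_neg at hcon
      choose gs hgs hns using hcon
      have hq : ∀ n, ∃ q, q ∈ gs n • C n ∧ q ∉ U₀ := by
        intro n
        exact Set.not_subset.1 (hns n)
      choose q hq1 hq2 using hq
      -- each translate is connected, contains x, and exits U₀, hence meets the frontier
      have hz : ∀ n, ∃ z, z ∈ (gs n • C n) ∩ frontier U₀ := by
        intro n
        have hconn : IsPreconnected (gs n • C n) := by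
          rw [← Set.image_smul]
          exact (hCconn n).isPreconnected.image _ (continuous_const_smul (gs n)).continuousOn
        have hx' : x ∈ gs n • C n := by
          have := Set.smul_mem_smul_set (a := gs n) (hxC n)
          rwa [hgs n] at this
        exact aux_preconnected_frontier hconn ⟨x, hx', hxU₀⟩ ⟨q n, hq1 n, hq2 n⟩
      choose z hzmem using hz
      have hz1 : ∀ n, z n ∈ gs n • C n := fun n => (hzmem n).1
      have hz2 : ∀ n, z n ∈ frontier U₀ := fun n => (hzmem n).2
      -- pass to a convergent subsequence in the compact frontier
      obtain ⟨zlim, hzlim, φ, hφ, hφt⟩ := hfC.tendsto_subseq hz2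
      -- the corresponding points in C n converge to x
      have hw : ∀ n, (gs n)⁻¹ • z n ∈ C n := by
        intro n
        rw [← Set.mem_smul_set_iff_inv_smul_mem]
        exact hz1 n
      have hwt : Filter.Tendsto (fun n => (gs n)⁻¹ • z n) Filter.atTop (𝓝 x) :=
        hB.tendsto fun n => hCB n (hw n)
      -- identify limits in the Hausdorff quotient
      set p : X → Quotient (MulAction.orbitRel G X) := Quotient.mk (orbitRel G X) with hp
      have hpc : Continuous p := continuous_quotient_mk'
      have hpz : ∀ n, p (z n) = p ((gs n)⁻¹ • z n) := by
        intro n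
        exact Quotient.sound ⟨gs n, smul_inv_smul _ _⟩
      have h1 : Filter.Tendsto (fun n => p (z (φ n))) Filter.atTop (𝓝 (p zlim)) :=
        (hpc.tendsto zlim).comp hφt
      have h2 : Filter.Tendsto (fun n => p (z (φ n))) Filter.atTop (𝓝 (p x)) := by
        have : Filter.Tendsto (fun n => p ((gs (φ n))⁻¹ • z (φ n))) Filter.atTop (𝓝 (p x)) :=
          ((hpc.tendsto x).comp hwt).comp (hφ.tendsto_atTop)
        simpa only [← hpz] using this
      have heq : p zlim = p x := tendsto_nhds_unique h1 h2
      have : zlim ∈ MulAction.orbit G x := MulAction.orbitRel_apply.1 (Quotient.exact heq)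
      exact (Set.eq_empty_iff_forall_notMem.1 hfS zlim) ⟨hzlim, this⟩
    obtain ⟨n, hn⟩ := hmain
    -- the union of stabilizer translates of C n
    set A : Set X := ⋃ g : {g : G // g • x = x}, (g : G) • C n with hA
    have hAopen : IsOpen A := isOpen_iUnion fun g => (hCopen n).smul _
    have hxA : x ∈ A := Set.mem_iUnion.2 ⟨⟨1, one_smul G x⟩, by
      simpa using Set.smul_mem_smul_set (a := (1 : G)) (hxC n)⟩
    have hAU : A ⊆ U := by
      refine Set.iUnion_subset fun g => ?_
      exact (hn g g.2).trans (interior_subset.trans fun y hy => (hKsub hy).2)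
    have hAinv : ∀ h : G, h • x = x → h • A ⊆ A := by
      rintro h hh y ⟨a, haA, rfl⟩
      obtain ⟨g, hag⟩ := Set.mem_iUnion.1 haA
      refine Set.mem_iUnion.2 ⟨⟨h * (g : G), by rw [mul_smul, g.2, hh]⟩, ?_⟩
      obtain ⟨c, hc, rfl⟩ := hag
      exact ⟨c, hc, by simp [mul_smul]⟩
    have hAeq : ∀ h : G, h • x = x → h • A = A := by
      intro h hh
      refine Set.Subset.antisymm (hAinv h hh) ?_
      have hinv : h⁻¹ • x = x := by rw [inv_smul_eq_iff, hh]
      intro a haA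
      have : h⁻¹ • a ∈ A := hAinv h⁻¹ hinv ⟨a, haA, rfl⟩
      exact ⟨h⁻¹ • a, this, smul_inv_smul h a⟩
    -- take the connected component of x
    refine ⟨connectedComponentIn A x, hAopen.connectedComponentIn,
      mem_connectedComponentIn hxA, (connectedComponentIn_subset A x).trans hAU,
      isConnected_connectedComponentIn_iff.2 hxA, ?_⟩
    intro g hg
    calc g • connectedComponentIn A x
        = (fun y => g • y) '' connectedComponentIn A x := (Set.image_smul).symm
      _ = connectedComponentIn ((fun y => g • y) '' A) (g • x) := by
          simpa using (Homeomorph.smul g (α := X)).image_connectedComponentIn hxA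
      _ = connectedComponentIn A x := by rw [Set.image_smul, hAeq g hg, hg]
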